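/- Let H be a Hopf algebra with universal R-matrix R = Σ_t α_t ⊗ β_t satisfying R·Δ(x) = Δ'(x)·R, (Δ ⊗ id)R = R₁₃R₂₃, and (id ⊗ Δ)R = R₁₃R₁₂. Let (A, μ_A) and (B, μ_B) be H-module algebras. Define a multiplication on A ⊗ B by (a₁ ⊗ b₁)(a₂ ⊗ b₂) = Σ_t a₁·(β_t a₂) ⊗ (α_t b₁)·b₂. Then this multiplication is associative, has identity 1_A ⊗ 1_B, and makes A ⊗ B an H-module algebra under the diagonal action x·(a ⊗ b) = Σ x₍₁₎a ⊗ x₍₂₎b. -/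

import Mathlib

open TensorProduct

set_option maxHeartbeats 1000000
set_option synthInstance.maxHeartbeats 400000


section St3Aux

variable {k : Type*} [Field k] {H : Type*} [Ring H] [HopfAlgebra k H]
    {A : Type*} [Ring A] [Algebra k A] {B : Type*} [Ring B] [Algebra k B]
    (actA : H →ₗ[k] A →ₗ[k] A) (actB : H →ₗ[k] B →ₗ[k] B)

/-- auxiliary: the action of `H ⊗ H` on `A ⊗ B`. -/
noncomputable def st3phi : (H ⊗[k] H) →ₗ[k] (A ⊗[k] B) →ₗ[k] A ⊗[k] B :=
  TensorProduct.homTensorHomMap (RingHom.id k) A B A B ∘ₗ TensorProduct.map actA actB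

@[simp] lemma st3phi_tmul (y z : H) :
    st3phi actA actB (y ⊗ₜ[k] z) = TensorProduct.map (actA y) (actB z) := by
  simp [st3phi]

lemma st3phi_mul (hAmul : ∀ x y, actA (x * y) = actA x ∘ₗ actA y)
    (hBmul : ∀ x y, actB (x * y) = actB x ∘ₗ actB y) (m n : H ⊗[k] H) :
    st3phi actA actB (m * n) = st3phi actA actB m ∘ₗ st3phi actA actB n := by
  induction m using TensorProduct.induction_on with
  | zero => simp
  | add m₁ m₂ h₁ h₂ => simp [add_mul, map_add, h₁, h₂, LinearMap.add_comp]
  | tmul y z =>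
    induction n using TensorProduct.induction_on with
    | zero => simp
    | add n₁ n₂ h₁ h₂ => simp [mul_add, map_add, h₁, h₂, LinearMap.comp_add]
    | tmul y' z' =>
      simp [Algebra.TensorProduct.tmul_mul_tmul, hAmul, hBmul, TensorProduct.map_comp]

/-- auxiliary: commutativity of `TensorProduct.comm` with multiplication. -/
lemma st3comm_mul (m n : H ⊗[k] H) :
    TensorProduct.comm k H H (m * n) =
      TensorProduct.comm k H H m * TensorProduct.comm k H H n := by
  induction m using TensorProduct.induction_on with
  | zero => simp
  | add m₁ m₂ h₁ h₂ => simp [add_mul, map_add, h₁, h₂]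
  | tmul y z =>
    induction n using TensorProduct.induction_on with
    | zero => simp
    | add n₁ n₂ h₁ h₂ => simp [mul_add, map_add, h₁, h₂]
    | tmul y' z' => simp [Algebra.TensorProduct.tmul_mul_tmul]

lemma st3comm_comm (m : H ⊗[k] H) :
    TensorProduct.comm k H H (TensorProduct.comm k H H m) = m := by
  induction m using TensorProduct.induction_on with
  | zero => simp
  | add m₁ m₂ h₁ h₂ => simp [map_add, h₁, h₂]
  | tmul y z => simp

/-- auxiliary: the four-fold action map. -/
noncomputable def st3Q (a₁ a₂ : A) (b₁ b₂ : B) :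
    (H ⊗[k] H) ⊗[k] (H ⊗[k] H) →ₗ[k] A ⊗[k] B :=
  TensorProduct.map
    (LinearMap.mul' k A ∘ₗ TensorProduct.map (actA.flip a₁) (actA.flip a₂))
    (LinearMap.mul' k B ∘ₗ TensorProduct.map (actB.flip b₁) (actB.flip b₂))

@[simp] lemma st3Q_tmul (a₁ a₂ : A) (b₁ b₂ : B) (y z p q : H) :
    st3Q actA actB a₁ a₂ b₁ b₂ ((y ⊗ₜ[k] z) ⊗ₜ[k] (p ⊗ₜ[k] q)) =
      (actA y a₁ * actA z a₂) ⊗ₜ[k] (actB p b₁ * actB q b₂) := by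
  simp [st3Q]

@[simp] lemma st3Q_tmul' (a₁ a₂ : A) (b₁ b₂ : B) (n₁ n₂ : H ⊗[k] H) :
    st3Q actA actB a₁ a₂ b₁ b₂ (n₁ ⊗ₜ[k] n₂) =
      ((LinearMap.mul' k A ∘ₗ TensorProduct.map (actA.flip a₁) (actA.flip a₂)) n₁) ⊗ₜ[k]
      ((LinearMap.mul' k B ∘ₗ TensorProduct.map (actB.flip b₁) (actB.flip b₂)) n₂) := by
  simp [st3Q]

/-- auxiliary rearrangement `(H ⊗ (H ⊗ H)) ⊗ H → (H ⊗ H) ⊗ (H ⊗ H)`. -/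
noncomputable def st3rearr :
    (H ⊗[k] (H ⊗[k] H)) ⊗[k] H →ₗ[k] (H ⊗[k] H) ⊗[k] (H ⊗[k] H) :=
  (TensorProduct.assoc k (H ⊗[k] H) H H).toLinearMap ∘ₗ
    LinearMap.rTensor H (TensorProduct.assoc k H H H).symm.toLinearMap

@[simp] lemma st3rearr_tmul (y p q v : H) :
    st3rearr (k := k) ((y ⊗ₜ[k] (p ⊗ₜ[k] q)) ⊗ₜ[k] v) = (y ⊗ₜ[k] p) ⊗ₜ[k] (q ⊗ₜ[k] v) := by
  simp [st3rearr]

end St3Aux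

section St3Aux2
variable {k : Type*} [Field k] {H : Type*} [Ring H] [HopfAlgebra k H]
    {A : Type*} [Ring A] [Algebra k A] {B : Type*} [Ring B] [Algebra k B]
    (actA : H →ₗ[k] A →ₗ[k] A) (actB : H →ₗ[k] B →ₗ[k] B)

/-- auxiliary map for the left-hand side of associativity. -/
noncomputable def st3EL (N : ℕ) (α β : Fin N → H) (a₁ a₂ a₃ : A) (b₁ b₂ b₃ : B) :
    H ⊗[k] (H ⊗[k] H) →ₗ[k] A ⊗[k] B :=
  ∑ t, (TensorProduct.comm k B A).toLinearMap ∘ₗ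
    TensorProduct.map
      (LinearMap.mulRight k b₃ ∘ₗ LinearMap.mul' k B ∘ₗ
        TensorProduct.map (actB.flip (actB (α t) b₁)) (actB.flip b₂))
      (LinearMap.mulLeft k (a₁ * actA (β t) a₂) ∘ₗ actA.flip a₃) ∘ₗ
    (TensorProduct.assoc k H H H).symm.toLinearMap

@[simp] lemma st3EL_tmul (N : ℕ) (α β : Fin N → H) (a₁ a₂ a₃ : A) (b₁ b₂ b₃ : B)
    (p q r : H) :
    st3EL actA actB N α β a₁ a₂ a₃ b₁ b₂ b₃ (p ⊗ₜ[k] (q ⊗ₜ[k] r)) =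
      ∑ t, (a₁ * (actA (β t) a₂ * actA r a₃)) ⊗ₜ[k]
        (actB p (actB (α t) b₁) * actB q b₂ * b₃) := by
  simp [st3EL, LinearMap.sum_apply]

/-- auxiliary map for the right-hand side of associativity. -/
noncomputable def st3ER (N : ℕ) (α β : Fin N → H) (a₁ a₂ a₃ : A) (b₁ b₂ b₃ : B) :
    H ⊗[k] (H ⊗[k] H) →ₗ[k] A ⊗[k] B :=
  ∑ s, (TensorProduct.comm k B A).toLinearMap ∘ₗ
    TensorProduct.map
      (LinearMap.mulRight k (actB (α s) b₂ * b₃) ∘ₗ actB.flip b₁)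
      (LinearMap.mulLeft k a₁ ∘ₗ LinearMap.mul' k A ∘ₗ
        TensorProduct.map (actA.flip a₂) (actA.flip (actA (β s) a₃)))

@[simp] lemma st3ER_tmul (N : ℕ) (α β : Fin N → H) (a₁ a₂ a₃ : A) (b₁ b₂ b₃ : B)
    (p q r : H) :
    st3ER actA actB N α β a₁ a₂ a₃ b₁ b₂ b₃ (p ⊗ₜ[k] (q ⊗ₜ[k] r)) =
      ∑ s, (a₁ * (actA q a₂ * actA r (actA (β s) a₃))) ⊗ₜ[k]
        (actB p b₁ * actB (α s) b₂ * b₃) := by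
  simp [st3ER, LinearMap.sum_apply]

lemma st3CA (x : H) :
    st3rearr (k := k) (LinearMap.rTensor H (LinearMap.lTensor H (Coalgebra.comul (R := k)))
      (LinearMap.rTensor H (Coalgebra.comul (R := k)) (Coalgebra.comul (R := k) x))) =
    TensorProduct.map (Coalgebra.comul (R := k)) (Coalgebra.comul (R := k))
      (Coalgebra.comul (R := k) x) := by
  set c : H →ₗ[k] H ⊗[k] H := Coalgebra.comul (R := k) with hc
  have s1 : LinearMap.rTensor H (LinearMap.lTensor H c)
      (LinearMap.rTensor H c (c x)) = LinearMap.rTensor H (c.lTensor H ∘ₗ c) (c x) := by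
    rw [LinearMap.rTensor_comp, LinearMap.comp_apply]
  rw [s1, ← Coalgebra.coassoc]
  rw [LinearMap.rTensor_comp, LinearMap.rTensor_comp, LinearMap.comp_apply,
    LinearMap.comp_apply]
  rw [st3rearr, LinearMap.comp_apply]
  rw [← LinearMap.rTensor_comp_apply]
  have s2 : ((TensorProduct.assoc k H H H).symm.toLinearMap ∘ₗ
      (TensorProduct.assoc k H H H).toLinearMap) = LinearMap.id := by
    ext w; simp
  rw [s2, LinearMap.rTensor_id, LinearMap.id_apply]
  have s3 : LinearMap.rTensor H (c.rTensor H) =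
      TensorProduct.map (TensorProduct.map c LinearMap.id) LinearMap.id := rfl
  rw [s3]
  simp only [LinearEquiv.coe_coe]
  rw [← TensorProduct.map_map_assoc]
  rw [Coalgebra.coassoc_apply]
  have s4 : TensorProduct.map c (TensorProduct.map (LinearMap.id (M := H)) (LinearMap.id (M := H)))
      = LinearMap.rTensor (H ⊗[k] H) c := by
    rw [TensorProduct.map_id]; rfl
  rw [s4, ← LinearMap.comp_apply, LinearMap.rTensor_comp_lTensor]



lemma st3C1 (N : ℕ) (α β : Fin N → H) (w : (H ⊗[k] (H ⊗[k] H)) ⊗[k] H) :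
    st3rearr w * (∑ t, ((1 : H) ⊗ₜ[k] β t) ⊗ₜ[k] ((α t) ⊗ₜ[k] (1 : H))) =
    st3rearr (LinearMap.rTensor H (LinearMap.lTensor H
      (LinearMap.mulRight k (∑ t, β t ⊗ₜ[k] α t))) w) := by
  induction w using TensorProduct.induction_on with
  | zero => simp only [map_zero, zero_mul, mul_zero]
  | add w₁ w₂ h₁ h₂ => simp only [map_add, add_mul, h₁, h₂]
  | tmul m v =>
    induction m using TensorProduct.induction_on with
    | zero => simp only [TensorProduct.zero_tmul, TensorProduct.tmul_zero, map_zero, zero_mul, mul_zero]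
    | add m₁ m₂ h₁ h₂ =>
      simp only [TensorProduct.add_tmul, map_add, add_mul, h₁, h₂]
    | tmul y n =>
      induction n using TensorProduct.induction_on with
      | zero => simp only [TensorProduct.zero_tmul, TensorProduct.tmul_zero, map_zero, zero_mul, mul_zero]
      | add n₁ n₂ h₁ h₂ =>
        simp only [TensorProduct.add_tmul, TensorProduct.tmul_add, map_add, add_mul, h₁, h₂]
      | tmul p q =>
        simp [Finset.mul_sum, Finset.sum_mul, Algebra.TensorProduct.tmul_mul_tmul,
          TensorProduct.tmul_sum, TensorProduct.sum_tmul, map_sum, mul_one, one_mul]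

lemma st3C2 (N : ℕ) (α β : Fin N → H) (w : (H ⊗[k] (H ⊗[k] H)) ⊗[k] H) :
    (∑ t, ((1 : H) ⊗ₜ[k] β t) ⊗ₜ[k] ((α t) ⊗ₜ[k] (1 : H))) *
      (TensorProduct.tensorTensorTensorComm k H H H H (st3rearr w)) =
    st3rearr (LinearMap.rTensor H (LinearMap.lTensor H
      (LinearMap.mulLeft k (∑ t, β t ⊗ₜ[k] α t) ∘ₗ
        (TensorProduct.comm k H H).toLinearMap)) w) := by
  induction w using TensorProduct.induction_on with
  | zero => simp only [map_zero, zero_mul, mul_zero]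
  | add w₁ w₂ h₁ h₂ => simp only [map_add, mul_add, h₁, h₂]
  | tmul m v =>
    induction m using TensorProduct.induction_on with
    | zero => simp only [TensorProduct.zero_tmul, TensorProduct.tmul_zero, map_zero, zero_mul, mul_zero]
    | add m₁ m₂ h₁ h₂ =>
      simp only [TensorProduct.add_tmul, map_add, mul_add, h₁, h₂]
    | tmul y n =>
      induction n using TensorProduct.induction_on with
      | zero => simp only [TensorProduct.zero_tmul, TensorProduct.tmul_zero, map_zero, zero_mul, mul_zero]
      | add n₁ n₂ h₁ h₂ =>
        simp only [TensorProduct.add_tmul, TensorProduct.tmul_add, map_add, mul_add, h₁, h₂]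
      | tmul p q =>
        simp [Finset.mul_sum, Finset.sum_mul, Algebra.TensorProduct.tmul_mul_tmul,
          TensorProduct.tmul_sum, TensorProduct.sum_tmul, map_sum, mul_one, one_mul]

lemma st3K (N : ℕ) (α β : Fin N → H)
    (hRDc : ∀ y : H, (Coalgebra.comul (R := k) y) * (∑ t, β t ⊗ₜ[k] α t) =
      (∑ t, β t ⊗ₜ[k] α t) * (TensorProduct.comm k H H (Coalgebra.comul (R := k) y)))
    (x : H) :
    (TensorProduct.map (Coalgebra.comul (R := k)) (Coalgebra.comul (R := k))
        (Coalgebra.comul (R := k) x)) *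
      (∑ t, ((1 : H) ⊗ₜ[k] β t) ⊗ₜ[k] ((α t) ⊗ₜ[k] (1 : H))) =
    (∑ t, ((1 : H) ⊗ₜ[k] β t) ⊗ₜ[k] ((α t) ⊗ₜ[k] (1 : H))) *
      (TensorProduct.tensorTensorTensorComm k H H H H
        (TensorProduct.map (Coalgebra.comul (R := k)) (Coalgebra.comul (R := k))
          (Coalgebra.comul (R := k) x))) := by
  rw [← st3CA x, st3C1, st3C2]
  have h2 : LinearMap.rTensor H (LinearMap.lTensor H
        (LinearMap.mulRight k (∑ t, β t ⊗ₜ[k] α t))) ∘ₗ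
      LinearMap.rTensor H (LinearMap.lTensor H (Coalgebra.comul (R := k))) =
      LinearMap.rTensor H (LinearMap.lTensor H
        (LinearMap.mulLeft k (∑ t, β t ⊗ₜ[k] α t) ∘ₗ
          (TensorProduct.comm k H H).toLinearMap)) ∘ₗ
      LinearMap.rTensor H (LinearMap.lTensor H (Coalgebra.comul (R := k))) := by
    rw [← LinearMap.rTensor_comp, ← LinearMap.rTensor_comp,
      ← LinearMap.lTensor_comp, ← LinearMap.lTensor_comp]
    congr 2
    ext y
    simpa using hRDc y
  congr 1
  simpa only [LinearMap.comp_apply] using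
    LinearMap.congr_fun h2 (LinearMap.rTensor H (Coalgebra.comul (R := k))
      (Coalgebra.comul (R := k) x))

lemma st3LA (hAmul : ∀ x y, actA (x * y) = actA x ∘ₗ actA y) (a₁ a₂ : A)
    (n : H ⊗[k] H) (h : H) :
    (LinearMap.mul' k A ∘ₗ TensorProduct.map (actA.flip a₁) (actA.flip a₂))
        (n * ((1 : H) ⊗ₜ[k] h)) =
      LinearMap.mul' k A (TensorProduct.homTensorHomMap (RingHom.id k) A A A A
        (TensorProduct.map actA actA n) (a₁ ⊗ₜ[k] actA h a₂)) := by
  induction n using TensorProduct.induction_on with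
  | zero => simp
  | add n₁ n₂ h₁ h₂ => simp only [add_mul, map_add, h₁, h₂, LinearMap.add_apply]
  | tmul p q =>
    simp [Algebra.TensorProduct.tmul_mul_tmul, hAmul, one_mul]

lemma st3LB (hBmul : ∀ x y, actB (x * y) = actB x ∘ₗ actB y) (b₁ b₂ : B)
    (n : H ⊗[k] H) (h : H) :
    (LinearMap.mul' k B ∘ₗ TensorProduct.map (actB.flip b₁) (actB.flip b₂))
        (n * (h ⊗ₜ[k] (1 : H))) =
      LinearMap.mul' k B (TensorProduct.homTensorHomMap (RingHom.id k) B B B B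
        (TensorProduct.map actB actB n) (actB h b₁ ⊗ₜ[k] b₂)) := by
  induction n using TensorProduct.induction_on with
  | zero => simp
  | add n₁ n₂ h₁ h₂ => simp only [add_mul, map_add, h₁, h₂, LinearMap.add_apply]
  | tmul p q =>
    simp [Algebra.TensorProduct.tmul_mul_tmul, hBmul, mul_one]

end St3Aux2



/-- Braided tensor product of module algebras.  Given `H`-module algebras
`A`, `B` and a universal R-matrix `R = Σ_t α_t ⊗ β_t` (a finite family of elements of
`H`) satisfying the hexagon relations, `R Δ = Δ' R` and the counit conditions, the
multiplication `(a₁⊗b₁)(a₂⊗b₂) = Σ_t a₁(β_t a₂) ⊗ (α_t b₁)b₂` on `A ⊗ B` is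
associative with identity `1 ⊗ 1`, and makes `A ⊗ B` an `H`-module algebra for the
diagonal action. -/
theorem stmt3 {k : Type*} [Field k] {H : Type*} [Ring H] [HopfAlgebra k H]
    {A : Type*} [Ring A] [Algebra k A] {B : Type*} [Ring B] [Algebra k B]
    (actA : H →ₗ[k] A →ₗ[k] A) (actB : H →ₗ[k] B →ₗ[k] B)
    (hAone : actA 1 = LinearMap.id) (hAmul : ∀ x y, actA (x * y) = actA x ∘ₗ actA y)
    (hBone : actB 1 = LinearMap.id) (hBmul : ∀ x y, actB (x * y) = actB x ∘ₗ actB y)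
    (hAalg : ∀ (x : H) (a a' : A),
      actA x (a * a') = LinearMap.mul' k A
        ((TensorProduct.homTensorHomMap (RingHom.id k) A A A A
            ((TensorProduct.map actA actA) (Coalgebra.comul (R := k) x))) (a ⊗ₜ[k] a')))
    (hAunit : ∀ x : H, actA x (1 : A) = Coalgebra.counit (R := k) x • (1 : A))
    (hBalg : ∀ (x : H) (b b' : B),
      actB x (b * b') = LinearMap.mul' k B
        ((TensorProduct.homTensorHomMap (RingHom.id k) B B B B
            ((TensorProduct.map actB actB) (Coalgebra.comul (R := k) x))) (b ⊗ₜ[k] b')))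
    (hBunit : ∀ x : H, actB x (1 : B) = Coalgebra.counit (R := k) x • (1 : B))
    -- the R-matrix, given by a finite family of elements of `H`
    (N : ℕ) (α β : Fin N → H)
    -- `R Δ(x) = Δ'(x) R` in `H ⊗ H`
    (hRD : ∀ x : H,
      (∑ t, α t ⊗ₜ[k] β t) * Bialgebra.comulAlgHom k H x =
        (TensorProduct.comm k H H) (Bialgebra.comulAlgHom k H x) * ∑ t, α t ⊗ₜ[k] β t)
    -- hexagon `(Δ ⊗ id)R = R₁₃ R₂₃` in `H ⊗ (H ⊗ H)`
    (hhex1 :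
      (∑ t, (Algebra.TensorProduct.assoc k k k H H H)
          ((Coalgebra.comul (R := k) (α t)) ⊗ₜ[k] β t)) =
        (∑ t, α t ⊗ₜ[k] ((1 : H) ⊗ₜ[k] β t)) * ∑ t, (1 : H) ⊗ₜ[k] (α t ⊗ₜ[k] β t))
    -- hexagon `(id ⊗ Δ)R = R₁₃ R₁₂` in `H ⊗ (H ⊗ H)`
    (hhex2 :
      (∑ t, α t ⊗ₜ[k] (Coalgebra.comul (R := k) (β t))) =
        (∑ t, α t ⊗ₜ[k] ((1 : H) ⊗ₜ[k] β t)) * ∑ t, α t ⊗ₜ[k] (β t ⊗ₜ[k] (1 : H)))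
    -- counit conditions `(ε ⊗ id)R = 1`, `(id ⊗ ε)R = 1`
    (hcounit1 : (∑ t, Coalgebra.counit (R := k) (α t) • β t) = (1 : H))
    (hcounit2 : (∑ t, Coalgebra.counit (R := k) (β t) • α t) = (1 : H)) :
    -- the braided multiplication on `A ⊗ B`
    let mulAB : (A ⊗[k] B) ⊗[k] (A ⊗[k] B) →ₗ[k] A ⊗[k] B :=
      ∑ t, (TensorProduct.map (LinearMap.mul' k A) (LinearMap.mul' k B)) ∘ₗ
        (TensorProduct.map (TensorProduct.map LinearMap.id (actA (β t)))
          (TensorProduct.map (actB (α t)) LinearMap.id)) ∘ₗ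
        (TensorProduct.tensorTensorTensorComm k A B A B).toLinearMap
    -- the diagonal action of `H` on `A ⊗ B`
    let actAB : H →ₗ[k] (A ⊗[k] B) →ₗ[k] (A ⊗[k] B) :=
      (TensorProduct.homTensorHomMap (RingHom.id k) A B A B) ∘ₗ
        (TensorProduct.map actA actB) ∘ₗ (Coalgebra.comul (R := k))
    -- associativity
    (∀ u v w : A ⊗[k] B, mulAB ((mulAB (u ⊗ₜ[k] v)) ⊗ₜ[k] w) =
        mulAB (u ⊗ₜ[k] (mulAB (v ⊗ₜ[k] w)))) ∧
    -- identity element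
    (∀ u : A ⊗[k] B, mulAB (((1 : A) ⊗ₜ[k] (1 : B)) ⊗ₜ[k] u) = u ∧
        mulAB (u ⊗ₜ[k] ((1 : A) ⊗ₜ[k] (1 : B))) = u) ∧
    -- the diagonal action is an `H`-module structure
    (actAB 1 = LinearMap.id) ∧ (∀ x y : H, actAB (x * y) = actAB x ∘ₗ actAB y) ∧
    -- `H` acts on products via the comultiplication
    (∀ (x : H) (u v : A ⊗[k] B),
      actAB x (mulAB (u ⊗ₜ[k] v)) =
        mulAB ((TensorProduct.homTensorHomMap (RingHom.id k) (A ⊗[k] B) (A ⊗[k] B) (A ⊗[k] B) (A ⊗[k] B)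
            ((TensorProduct.map actAB actAB) (Coalgebra.comul (R := k) x))) (u ⊗ₜ[k] v))) ∧
    -- `H` acts on the identity via the counit
    (∀ x : H, actAB x ((1 : A) ⊗ₜ[k] (1 : B)) =
        Coalgebra.counit (R := k) x • ((1 : A) ⊗ₜ[k] (1 : B))) := by

  intro mulAB actAB
  have hmb : mulAB = ∑ t, (TensorProduct.map (LinearMap.mul' k A) (LinearMap.mul' k B)) ∘ₗ
        (TensorProduct.map (TensorProduct.map LinearMap.id (actA (β t)))
          (TensorProduct.map (actB (α t)) LinearMap.id)) ∘ₗ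
        (TensorProduct.tensorTensorTensorComm k A B A B).toLinearMap := rfl
  have hact : ∀ x : H, actAB x = st3phi actA actB (Coalgebra.comul (R := k) x) := fun _ => rfl
  have hmulAB : ∀ (a₁ : A) (b₁ : B) (a₂ : A) (b₂ : B),
      mulAB ((a₁ ⊗ₜ[k] b₁) ⊗ₜ[k] (a₂ ⊗ₜ[k] b₂)) =
        ∑ t, (a₁ * actA (β t) a₂) ⊗ₜ[k] (actB (α t) b₁ * b₂) := by
    intro a₁ b₁ a₂ b₂
    rw [hmb]
    simp [LinearMap.sum_apply]
  have hRDc : ∀ y : H, (Coalgebra.comul (R := k) y) * (∑ t, β t ⊗ₜ[k] α t) =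
      (∑ t, β t ⊗ₜ[k] α t) * (TensorProduct.comm k H H (Coalgebra.comul (R := k) y)) := by
    intro y
    have h := hRD y
    rw [Bialgebra.comulAlgHom_apply] at h
    have h2 := congrArg (TensorProduct.comm k H H) h
    rw [st3comm_mul, st3comm_mul, st3comm_comm] at h2
    have hcR : TensorProduct.comm k H H (∑ t, α t ⊗ₜ[k] β t) = ∑ t, β t ⊗ₜ[k] α t := by
      simp
    rw [hcR] at h2
    exact h2.symm
  refine ⟨?_, ?_, ?_, ?_, ?_, ?_⟩
  · -- associativity
    intro u v w
    induction u using TensorProduct.induction_on with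
    | zero => simp
    | add u₁ u₂ h₁ h₂ => simp only [TensorProduct.add_tmul, map_add, h₁, h₂]
    | tmul a₁ b₁ =>
      induction v using TensorProduct.induction_on with
      | zero => simp
      | add v₁ v₂ h₁ h₂ =>
        simp only [TensorProduct.add_tmul, TensorProduct.tmul_add, map_add, h₁, h₂]
      | tmul a₂ b₂ =>
        induction w using TensorProduct.induction_on with
        | zero => simp
        | add w₁ w₂ h₁ h₂ =>
          simp only [TensorProduct.add_tmul, TensorProduct.tmul_add, map_add, h₁, h₂]
        | tmul a₃ b₃ =>
          have hbridge : ∀ w' : (H ⊗[k] H) ⊗[k] H,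
              (Algebra.TensorProduct.assoc k k k H H H) w' = TensorProduct.assoc k H H H w' := by
            intro w'
            induction w' using TensorProduct.induction_on with
            | zero => simp
            | add x₁ x₂ h₁ h₂ => simp only [map_add, h₁, h₂]
            | tmul m v' =>
              induction m using TensorProduct.induction_on with
              | zero => simp only [TensorProduct.zero_tmul, map_zero]
              | add x₁ x₂ h₁ h₂ => simp only [TensorProduct.add_tmul, map_add, h₁, h₂]
              | tmul p q => simp
          have hhex1' : (∑ s, TensorProduct.assoc k H H H
                ((Coalgebra.comul (R := k) (α s)) ⊗ₜ[k] β s)) =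
              ∑ t, ∑ u, α t ⊗ₜ[k] (α u ⊗ₜ[k] (β t * β u)) := by
            rw [show (∑ s, TensorProduct.assoc k H H H
                ((Coalgebra.comul (R := k) (α s)) ⊗ₜ[k] β s)) =
                (∑ s, (Algebra.TensorProduct.assoc k k k H H H)
                ((Coalgebra.comul (R := k) (α s)) ⊗ₜ[k] β s)) from
              Finset.sum_congr rfl fun s _ => (hbridge _).symm]
            rw [hhex1, Finset.sum_mul_sum]
            simp [Algebra.TensorProduct.tmul_mul_tmul]
          have hhex2' : (∑ t, α t ⊗ₜ[k] (Coalgebra.comul (R := k) (β t))) =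
              ∑ t, ∑ u, (α t * α u) ⊗ₜ[k] (β u ⊗ₜ[k] β t) := by
            rw [hhex2, Finset.sum_mul_sum]
            simp [Algebra.TensorProduct.tmul_mul_tmul]
          have hELarg : ∀ (n : H ⊗[k] H) (r : H),
              st3EL actA actB N α β a₁ a₂ a₃ b₁ b₂ b₃
                  (TensorProduct.assoc k H H H (n ⊗ₜ[k] r)) =
                ∑ t, (a₁ * (actA (β t) a₂ * actA r a₃)) ⊗ₜ[k]
                  (LinearMap.mul' k B (TensorProduct.homTensorHomMap (RingHom.id k) B B B B
                    (TensorProduct.map actB actB n) ((actB (α t) b₁) ⊗ₜ[k] b₂)) * b₃) := by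
            intro n r
            induction n using TensorProduct.induction_on with
            | zero => simp
            | add n₁ n₂ h₁ h₂ =>
              simp only [TensorProduct.add_tmul, map_add, LinearMap.add_apply, add_mul,
                TensorProduct.tmul_add, h₁, h₂, ← Finset.sum_add_distrib]
            | tmul p q =>
              rw [TensorProduct.assoc_tmul, st3EL_tmul]
              refine Finset.sum_congr rfl fun t _ => ?_
              simp
          have hERarg : ∀ (p : H) (n : H ⊗[k] H),
              st3ER actA actB N α β a₁ a₂ a₃ b₁ b₂ b₃ (p ⊗ₜ[k] n) =
                ∑ s, (a₁ * LinearMap.mul' k A (TensorProduct.homTensorHomMap (RingHom.id k) A A A A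
                    (TensorProduct.map actA actA n) (a₂ ⊗ₜ[k] actA (β s) a₃))) ⊗ₜ[k]
                  (actB p b₁ * actB (α s) b₂ * b₃) := by
            intro p n
            induction n using TensorProduct.induction_on with
            | zero => simp
            | add n₁ n₂ h₁ h₂ =>
              simp only [TensorProduct.tmul_add, map_add, LinearMap.add_apply, mul_add,
                TensorProduct.add_tmul, h₁, h₂, ← Finset.sum_add_distrib]
            | tmul q r =>
              rw [st3ER_tmul]
              refine Finset.sum_congr rfl fun s _ => ?_
              simp
          have hELs : ∀ s : Fin N, st3EL actA actB N α β a₁ a₂ a₃ b₁ b₂ b₃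
                (TensorProduct.assoc k H H H ((Coalgebra.comul (R := k) (α s)) ⊗ₜ[k] β s)) =
              ∑ t, ((a₁ * actA (β t) a₂) * actA (β s) a₃) ⊗ₜ[k]
                (actB (α s) (actB (α t) b₁ * b₂) * b₃) := by
            intro s
            rw [hELarg]
            refine Finset.sum_congr rfl fun t _ => ?_
            rw [← hBalg, ← mul_assoc]
          have hERs : ∀ t : Fin N, st3ER actA actB N α β a₁ a₂ a₃ b₁ b₂ b₃
                (α t ⊗ₜ[k] (Coalgebra.comul (R := k) (β t))) =
              ∑ s, (a₁ * actA (β t) (a₂ * actA (β s) a₃)) ⊗ₜ[k]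
                (actB (α t) b₁ * (actB (α s) b₂ * b₃)) := by
            intro t
            rw [hERarg]
            refine Finset.sum_congr rfl fun s _ => ?_
            rw [← hAalg, mul_assoc]
          have eL : (∑ t, mulAB (((a₁ * actA (β t) a₂) ⊗ₜ[k] (actB (α t) b₁ * b₂)) ⊗ₜ[k]
                (a₃ ⊗ₜ[k] b₃))) =
              ∑ t, ∑ u, ∑ v, (a₁ * (actA (β v) a₂ * actA (β t) (actA (β u) a₃))) ⊗ₜ[k]
                (actB (α t) (actB (α v) b₁) * actB (α u) b₂ * b₃) := by
            calc (∑ t, mulAB (((a₁ * actA (β t) a₂) ⊗ₜ[k] (actB (α t) b₁ * b₂)) ⊗ₜ[k]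
                (a₃ ⊗ₜ[k] b₃)))
                = ∑ t, ∑ s, ((a₁ * actA (β t) a₂) * actA (β s) a₃) ⊗ₜ[k]
                    (actB (α s) (actB (α t) b₁ * b₂) * b₃) :=
                  Finset.sum_congr rfl fun t _ => hmulAB _ _ _ _
              _ = ∑ s, ∑ t, ((a₁ * actA (β t) a₂) * actA (β s) a₃) ⊗ₜ[k]
                    (actB (α s) (actB (α t) b₁ * b₂) * b₃) := Finset.sum_comm ..
              _ = ∑ s, st3EL actA actB N α β a₁ a₂ a₃ b₁ b₂ b₃
                    (TensorProduct.assoc k H H H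
                      ((Coalgebra.comul (R := k) (α s)) ⊗ₜ[k] β s)) :=
                  Finset.sum_congr rfl fun s _ => (hELs s).symm
              _ = st3EL actA actB N α β a₁ a₂ a₃ b₁ b₂ b₃ (∑ s, TensorProduct.assoc k H H H
                    ((Coalgebra.comul (R := k) (α s)) ⊗ₜ[k] β s)) := (map_sum _ _ _).symm
              _ = st3EL actA actB N α β a₁ a₂ a₃ b₁ b₂ b₃
                    (∑ t, ∑ u, α t ⊗ₜ[k] (α u ⊗ₜ[k] (β t * β u))) := by rw [hhex1']
              _ = ∑ t, ∑ u, ∑ v, (a₁ * (actA (β v) a₂ * actA (β t) (actA (β u) a₃))) ⊗ₜ[k]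
                    (actB (α t) (actB (α v) b₁) * actB (α u) b₂ * b₃) := by
                  rw [map_sum]
                  refine Finset.sum_congr rfl fun t _ => ?_
                  rw [map_sum]
                  refine Finset.sum_congr rfl fun u _ => ?_
                  rw [st3EL_tmul]
                  refine Finset.sum_congr rfl fun v _ => ?_
                  simp only [hAmul, LinearMap.comp_apply]
          have eR : (∑ s, mulAB ((a₁ ⊗ₜ[k] b₁) ⊗ₜ[k]
                ((a₂ * actA (β s) a₃) ⊗ₜ[k] (actB (α s) b₂ * b₃)))) =
              ∑ t, ∑ u, ∑ v, (a₁ * (actA (β u) a₂ * actA (β t) (actA (β v) a₃))) ⊗ₜ[k]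
                (actB (α t) (actB (α u) b₁) * actB (α v) b₂ * b₃) := by
            calc (∑ s, mulAB ((a₁ ⊗ₜ[k] b₁) ⊗ₜ[k]
                ((a₂ * actA (β s) a₃) ⊗ₜ[k] (actB (α s) b₂ * b₃))))
                = ∑ s, ∑ t, (a₁ * actA (β t) (a₂ * actA (β s) a₃)) ⊗ₜ[k]
                    (actB (α t) b₁ * (actB (α s) b₂ * b₃)) :=
                  Finset.sum_congr rfl fun s _ => hmulAB _ _ _ _
              _ = ∑ t, ∑ s, (a₁ * actA (β t) (a₂ * actA (β s) a₃)) ⊗ₜ[k]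
                    (actB (α t) b₁ * (actB (α s) b₂ * b₃)) := Finset.sum_comm ..
              _ = ∑ t, st3ER actA actB N α β a₁ a₂ a₃ b₁ b₂ b₃
                    (α t ⊗ₜ[k] (Coalgebra.comul (R := k) (β t))) :=
                  Finset.sum_congr rfl fun t _ => (hERs t).symm
              _ = st3ER actA actB N α β a₁ a₂ a₃ b₁ b₂ b₃
                    (∑ t, α t ⊗ₜ[k] (Coalgebra.comul (R := k) (β t))) := (map_sum _ _ _).symm
              _ = st3ER actA actB N α β a₁ a₂ a₃ b₁ b₂ b₃
                    (∑ t, ∑ u, (α t * α u) ⊗ₜ[k] (β u ⊗ₜ[k] β t)) := by rw [hhex2']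
              _ = ∑ t, ∑ u, ∑ v, (a₁ * (actA (β u) a₂ * actA (β t) (actA (β v) a₃))) ⊗ₜ[k]
                    (actB (α t) (actB (α u) b₁) * actB (α v) b₂ * b₃) := by
                  rw [map_sum]
                  refine Finset.sum_congr rfl fun t _ => ?_
                  rw [map_sum]
                  refine Finset.sum_congr rfl fun u _ => ?_
                  rw [st3ER_tmul]
                  refine Finset.sum_congr rfl fun v _ => ?_
                  simp only [hBmul, LinearMap.comp_apply]
          rw [hmulAB a₁ b₁ a₂ b₂, hmulAB a₂ b₂ a₃ b₃, TensorProduct.sum_tmul,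
            TensorProduct.tmul_sum, map_sum, map_sum, eL, eR]
          refine Finset.sum_congr rfl fun t _ => ?_
          exact Finset.sum_comm ..
  · -- unit
    intro u
    induction u using TensorProduct.induction_on with
    | zero => simp
    | add u₁ u₂ h₁ h₂ =>
      obtain ⟨h₁l, h₁r⟩ := h₁; obtain ⟨h₂l, h₂r⟩ := h₂
      constructor
      · rw [TensorProduct.tmul_add, map_add, h₁l, h₂l]
      · rw [TensorProduct.add_tmul, map_add, h₁r, h₂r]
    | tmul a b =>
      constructor
      · rw [hmulAB]
        have key : ∀ t : Fin N, ((1 : A) * actA (β t) a) ⊗ₜ[k] (actB (α t) (1 : B) * b) =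
            Coalgebra.counit (R := k) (α t) • ((actA (β t) a) ⊗ₜ[k] b) := by
          intro t
          rw [one_mul, hBunit, smul_mul_assoc, one_mul, TensorProduct.tmul_smul]
        rw [Finset.sum_congr rfl fun t _ => key t]
        have : (∑ t, Coalgebra.counit (R := k) (α t) • ((actA (β t) a) ⊗ₜ[k] b)) =
            (actA (∑ t, Coalgebra.counit (R := k) (α t) • β t) a) ⊗ₜ[k] b := by
          rw [map_sum, LinearMap.sum_apply, TensorProduct.sum_tmul]
          refine Finset.sum_congr rfl fun t _ => ?_
          rw [map_smul, LinearMap.smul_apply, TensorProduct.smul_tmul']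
        rw [this, hcounit1, hAone]; rfl
      · rw [hmulAB]
        have key : ∀ t : Fin N, (a * actA (β t) (1 : A)) ⊗ₜ[k] (actB (α t) b * (1 : B)) =
            Coalgebra.counit (R := k) (β t) • (a ⊗ₜ[k] (actB (α t) b)) := by
          intro t
          rw [mul_one, hAunit, mul_smul_comm, mul_one, TensorProduct.smul_tmul', TensorProduct.smul_tmul]
        rw [Finset.sum_congr rfl fun t _ => key t]
        have : (∑ t, Coalgebra.counit (R := k) (β t) • (a ⊗ₜ[k] (actB (α t) b))) =
            a ⊗ₜ[k] (actB (∑ t, Coalgebra.counit (R := k) (β t) • α t) b) := by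
          rw [map_sum, LinearMap.sum_apply, TensorProduct.tmul_sum]
          refine Finset.sum_congr rfl fun t _ => ?_
          rw [map_smul, LinearMap.smul_apply, TensorProduct.tmul_smul]
        rw [this, hcounit2, hBone]; rfl
  · -- actAB 1 = id
    rw [hact, Bialgebra.comul_one, Algebra.TensorProduct.one_def, st3phi_tmul, hAone, hBone]
    exact TensorProduct.map_id
  · -- multiplicativity of the action
    intro x y
    rw [hact, hact, hact, Bialgebra.comul_mul]
    exact st3phi_mul actA actB hAmul hBmul _ _
  · -- module algebra property
    intro x u v
    induction u using TensorProduct.induction_on with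
    | zero => simp
    | add u₁ u₂ h₁ h₂ => simp only [TensorProduct.add_tmul, map_add, h₁, h₂]
    | tmul a₁ b₁ =>
      induction v using TensorProduct.induction_on with
      | zero => simp
      | add v₁ v₂ h₁ h₂ => simp only [TensorProduct.tmul_add, map_add, h₁, h₂]
      | tmul a₂ b₂ =>
        have hLm : ∀ m : H ⊗[k] H,
            st3phi actA actB m (∑ t, (a₁ * actA (β t) a₂) ⊗ₜ[k] (actB (α t) b₁ * b₂)) =
            st3Q actA actB a₁ a₂ b₁ b₂
              ((TensorProduct.map (Coalgebra.comul (R := k)) (Coalgebra.comul (R := k)) m) *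
                (∑ t, ((1 : H) ⊗ₜ[k] β t) ⊗ₜ[k] ((α t) ⊗ₜ[k] (1 : H)))) := by
          intro m
          induction m using TensorProduct.induction_on with
          | zero => simp
          | add m₁ m₂ h₁ h₂ =>
            simp only [map_add, LinearMap.add_apply, add_mul, h₁, h₂]
          | tmul y z =>
            rw [st3phi_tmul, map_sum, TensorProduct.map_tmul, Finset.mul_sum, map_sum]
            refine Finset.sum_congr rfl fun t _ => ?_
            rw [TensorProduct.map_tmul, hAalg, hBalg,
              Algebra.TensorProduct.tmul_mul_tmul, st3Q_tmul',
              st3LA actA hAmul, st3LB actB hBmul]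
        have hRmInner : ∀ n₁ n₂ : H ⊗[k] H,
            mulAB ((st3phi actA actB n₁ (a₁ ⊗ₜ[k] b₁)) ⊗ₜ[k]
              (st3phi actA actB n₂ (a₂ ⊗ₜ[k] b₂))) =
            st3Q actA actB a₁ a₂ b₁ b₂
              ((∑ t, ((1 : H) ⊗ₜ[k] β t) ⊗ₜ[k] ((α t) ⊗ₜ[k] (1 : H))) *
                TensorProduct.tensorTensorTensorComm k H H H H (n₁ ⊗ₜ[k] n₂)) := by
          intro n₁ n₂
          induction n₁ using TensorProduct.induction_on with
          | zero => simp
          | add p₁ p₂ h₁ h₂ =>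
            simp only [map_add, LinearMap.add_apply, TensorProduct.add_tmul, mul_add,
              h₁, h₂]
          | tmul y₁ y₂ =>
            induction n₂ using TensorProduct.induction_on with
            | zero => simp
            | add q₁ q₂ h₁ h₂ =>
              simp only [map_add, LinearMap.add_apply, TensorProduct.tmul_add, mul_add,
                h₁, h₂]
            | tmul z₁ z₂ =>
              rw [st3phi_tmul, st3phi_tmul, TensorProduct.map_tmul, TensorProduct.map_tmul,
                hmulAB, TensorProduct.tensorTensorTensorComm_tmul, Finset.sum_mul, map_sum]
              refine Finset.sum_congr rfl fun t _ => ?_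
              rw [Algebra.TensorProduct.tmul_mul_tmul, Algebra.TensorProduct.tmul_mul_tmul,
                Algebra.TensorProduct.tmul_mul_tmul]
              simp only [one_mul]
              rw [st3Q_tmul]
              simp only [hAmul, hBmul, LinearMap.comp_apply]
        have hRm : ∀ m : H ⊗[k] H,
            mulAB ((TensorProduct.homTensorHomMap (RingHom.id k) (A ⊗[k] B) (A ⊗[k] B) (A ⊗[k] B) (A ⊗[k] B)
              ((TensorProduct.map actAB actAB) m)) ((a₁ ⊗ₜ[k] b₁) ⊗ₜ[k] (a₂ ⊗ₜ[k] b₂))) =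
            st3Q actA actB a₁ a₂ b₁ b₂
              ((∑ t, ((1 : H) ⊗ₜ[k] β t) ⊗ₜ[k] ((α t) ⊗ₜ[k] (1 : H))) *
                TensorProduct.tensorTensorTensorComm k H H H H
                  (TensorProduct.map (Coalgebra.comul (R := k)) (Coalgebra.comul (R := k)) m)) := by
          intro m
          induction m using TensorProduct.induction_on with
          | zero => simp
          | add m₁ m₂ h₁ h₂ =>
            simp only [map_add, LinearMap.add_apply, mul_add, h₁, h₂]
          | tmul y z =>
            rw [TensorProduct.map_tmul, TensorProduct.homTensorHomMap_apply,
              TensorProduct.map_tmul, hact, hact, TensorProduct.map_tmul]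
            exact hRmInner _ _
        rw [hmulAB, hact x, hLm, hRm, st3K N α β hRDc x]
  · -- counit property
    intro x
    rw [hact]
    have key : ∀ m : H ⊗[k] H, st3phi actA actB m ((1 : A) ⊗ₜ[k] (1 : B)) =
        (LinearMap.mul' k k (TensorProduct.map (Coalgebra.counit (R := k))
          (Coalgebra.counit (R := k)) m)) • ((1 : A) ⊗ₜ[k] (1 : B)) := by
      intro m
      induction m using TensorProduct.induction_on with
      | zero => simp
      | add m₁ m₂ h₁ h₂ => simp only [map_add, LinearMap.add_apply, h₁, h₂, add_smul]
      | tmul y z =>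
        simp [st3phi_tmul, hAunit, hBunit, TensorProduct.smul_tmul',
          TensorProduct.tmul_smul, smul_smul, mul_comm]
    rw [key]
    have h2 : LinearMap.mul' k k (TensorProduct.map (Coalgebra.counit (R := k))
        (Coalgebra.counit (R := k)) (Coalgebra.comul (R := k) x)) =
        Coalgebra.counit (R := k) x := by
      have h1 : (TensorProduct.map (Coalgebra.counit (R := k)) (Coalgebra.counit (R := k)))
          (Coalgebra.comul (R := k) x) =
          LinearMap.rTensor k (Coalgebra.counit (R := k))
            (LinearMap.lTensor H (Coalgebra.counit (R := k)) (Coalgebra.comul (R := k) x)) := by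
        rw [← LinearMap.rTensor_comp_lTensor, LinearMap.comp_apply]
      rw [h1, Coalgebra.lTensor_counit_comul, LinearMap.rTensor_tmul, LinearMap.mul'_apply, mul_one]
    rw [h2]
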